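/- Strengthened concavity of the von Neumann entropy: for any density matrices ρ and ξ on ℂ^d and any p ∈ [0,1], S((1−p)ρ + pξ) − [(1−p)S(ρ) + pS(ξ)] ≥ (p(1−p)/(2 ln 2))·‖ρ − ξ‖₂². -/

import Mathlib

open scoped ComplexOrder

noncomputable section

namespace ProofAux


/-- `-log t ≥ (1-t) + (1-t)^2/2` for `t ∈ (0,1]`. -/
lemma neg_log_ge (t : ℝ) (ht : 0 < t) (ht1 : t ≤ 1) :
    (1 - t) + (1 - t)^2 / 2 ≤ -Real.log t := by
  set g : ℝ → ℝ := fun s => -Real.log s - (1 - s) - (1 - s)^2/2 with hg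
  have hd : ∀ s ∈ Set.Ioi (0:ℝ), HasDerivAt g (-((1-s)^2)/s) s := by
    intro s hs
    have hs0 : (s:ℝ) ≠ 0 := ne_of_gt (Set.mem_Ioi.mp hs)
    have h1 : HasDerivAt Real.log (1/s) s := by
      simpa [one_div] using Real.hasDerivAt_log hs0
    have h2 : HasDerivAt (fun s : ℝ => (1 - s)) (-1) s := by
      simpa using (hasDerivAt_id s).const_sub 1
    have h3 : HasDerivAt (fun s : ℝ => (1 - s)^2/2) ((2*(1-s)*(-1))/2) s := by
      simpa using ((h2.pow 2).div_const 2)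
    have := (h1.neg.sub h2).sub h3
    refine HasDerivAt.congr_deriv this ?_
    field_simp; ring
  have key : AntitoneOn g (Set.Ioi (0:ℝ)) := by
    apply antitoneOn_of_deriv_nonpos (convex_Ioi 0)
    · intro s hs
      exact (hd s hs).continuousAt.continuousWithinAt
    · rw [interior_Ioi]
      intro s hs
      exact ((hd s hs).differentiableAt.differentiableWithinAt)
    · rw [interior_Ioi]
      intro s hs
      rw [(hd s hs).deriv]
      have hs' : (0:ℝ) < s := hs
      have h0 : 0 ≤ ((1-s)^2)/s := by positivity
      rw [neg_div]; linarith
  have h := key (Set.mem_Ioi.mpr ht) (Set.mem_Ioi.mpr one_pos) ht1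
  simp only [hg, Real.log_one] at h
  nlinarith [h]

/-- `log s ≥ (s-1) - (s-1)^2/(2s)` for `s ∈ (0,1]`. -/
lemma log_ge (s : ℝ) (hs : 0 < s) (hs1 : s ≤ 1) :
    (s - 1) - (s - 1)^2 / (2*s) ≤ Real.log s := by
  set g : ℝ → ℝ := fun u => Real.log u - (u - 1) + (u - 1)^2/(2*u) with hg
  have hd : ∀ u ∈ Set.Ioi (0:ℝ), HasDerivAt g (-((u-1)^2)/(2*u^2)) u := by
    intro u hu
    have hu' : (0:ℝ) < u := hu
    have hu0 : (u:ℝ) ≠ 0 := ne_of_gt hu'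
    have h1 : HasDerivAt Real.log (1/u) u := by
      simpa [one_div] using Real.hasDerivAt_log hu0
    have h2 : HasDerivAt (fun u : ℝ => (u - 1)) 1 u := by
      simpa using (hasDerivAt_id u).sub_const 1
    have hnum : HasDerivAt (fun u : ℝ => (u - 1)^2) (2*(u-1)*1) u := by
      simpa using (h2.fun_pow 2)
    have hden : HasDerivAt (fun u : ℝ => 2*u) 2 u := by
      simpa using (hasDerivAt_id u).const_mul 2
    have h3 : HasDerivAt (fun u : ℝ => (u - 1)^2/(2*u))
        (((2*(u-1)*1)*(2*u) - (u-1)^2*2)/(2*u)^2) u := hnum.div hden (by positivity)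
    have := (h1.sub h2).add h3
    refine HasDerivAt.congr_deriv this ?_
    field_simp; ring
  have key : AntitoneOn g (Set.Ioi (0:ℝ)) := by
    apply antitoneOn_of_deriv_nonpos (convex_Ioi 0)
    · intro u hu
      exact (hd u hu).continuousAt.continuousWithinAt
    · rw [interior_Ioi]
      intro u hu
      exact ((hd u hu).differentiableAt.differentiableWithinAt)
    · rw [interior_Ioi]
      intro u hu
      rw [(hd u hu).deriv]
      have hu' : (0:ℝ) < u := hu
      have h0 : 0 ≤ ((u-1)^2)/(2*u^2) := by positivity
      rw [neg_div]; linarith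
  have h := key (Set.mem_Ioi.mpr hs) (Set.mem_Ioi.mpr one_pos) hs1
  simp only [hg, Real.log_one] at h
  nlinarith [h]

/-- Key scalar inequality: strengthened Bregman divergence bound for `x log x` on `[0,1]`. -/
lemma key_scalar (a b : ℝ) (ha0 : 0 ≤ a) (ha1 : a ≤ 1) (hb0 : 0 < b) (hb1 : b ≤ 1) :
    (a - b)^2/2 ≤ a * Real.log a - a * Real.log b - a + b := by
  rcases eq_or_lt_of_le ha0 with h0 | ha0'
  · rw [← h0]; simp; nlinarith
  rcases le_or_gt b a with hab | hab
  · -- a ≥ b > 0 : use neg_log_ge with t = b/a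
    have ht : 0 < b/a := by positivity
    have ht1 : b/a ≤ 1 := by rw [div_le_one ha0']; exact hab
    have h := neg_log_ge (b/a) ht ht1
    rw [Real.log_div (ne_of_gt hb0) (ne_of_gt ha0')] at h
    have h' := mul_le_mul_of_nonneg_left h (le_of_lt ha0')
    have e1 : a * ((1 - b/a) + (1 - b/a)^2/2) = (a - b) + (a-b)^2/(2*a) := by
      field_simp
    have e2 : a * -(Real.log b - Real.log a) = a * Real.log a - a * Real.log b := by ring
    rw [e1, e2] at h'
    have e3 : (a-b)^2/2 ≤ (a-b)^2/(2*a) := by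
      apply div_le_div_of_nonneg_left (by positivity) (by positivity)
      nlinarith
    linarith
  · -- 0 < a < b : use log_ge with s = a/b
    have hs : 0 < a/b := by positivity
    have hs1 : a/b ≤ 1 := by rw [div_le_one hb0]; exact le_of_lt hab
    have h := log_ge (a/b) hs hs1
    rw [Real.log_div (ne_of_gt ha0') (ne_of_gt hb0)] at h
    have h' := mul_le_mul_of_nonneg_left h (le_of_lt ha0')
    have e1 : a * ((a/b - 1) - (a/b - 1)^2/(2*(a/b))) = a*(a-b)/b - (a-b)^2/(2*b) := by
      field_simp
    have e2 : a * (Real.log a - Real.log b) = a * Real.log a - a * Real.log b := by ring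
    rw [e1, e2] at h'
    have e3 : (a-b)^2/2 ≤ (a-b)^2/(2*b) := by
      apply div_le_div_of_nonneg_left (by positivity) (by positivity)
      nlinarith
    have ha : a*(a-b)/b - (a-b) = (a-b)^2/b := by field_simp
    have hc : (a-b)^2/b - (a-b)^2/(2*b) = (a-b)^2/(2*b) := by ring
    linarith




variable {n : Type*} [Fintype n] [DecidableEq n]

open Matrix

/-- Diagonal entry of a unitary conjugation of a Hermitian matrix. -/
lemma conj_diag {A : Matrix n n ℂ} (hA : A.IsHermitian) (U : Matrix n n ℂ)
    (hU : U ∈ Matrix.unitaryGroup n ℂ) (i : n) :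
    (star U * A * U) i i =
      ((∑ k, ‖((star U * (hA.eigenvectorUnitary : Matrix n n ℂ)) i k)‖ ^ 2
        * hA.eigenvalues k : ℝ) : ℂ) := by
  set V : Matrix n n ℂ := (hA.eigenvectorUnitary : Matrix n n ℂ) with hV
  set C : Matrix n n ℂ := star U * V with hC
  have hCs : star C = star V * U := by rw [hC, StarMul.star_mul, star_star]
  have key : star U * A * U = C * Matrix.diagonal (RCLike.ofReal ∘ hA.eigenvalues) * star C := by
    conv_lhs => rw [hA.spectral_theorem, Unitary.conjStarAlgAut_apply]
    rw [hCs, hC]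
    simp only [Matrix.mul_assoc]
    rfl
  rw [key]
  rw [Matrix.mul_apply]
  have heach : ∀ k, (C * (Matrix.diagonal (RCLike.ofReal ∘ hA.eigenvalues) : Matrix n n ℂ)) i k
        * (star C) k i
      = ((‖(C i k)‖ ^ 2 * hA.eigenvalues k : ℝ) : ℂ) := by
    intro k
    rw [Matrix.mul_diagonal, Matrix.star_apply]
    have h2 : C i k * ((RCLike.ofReal ∘ hA.eigenvalues) k : ℂ) * star (C i k)
        = (C i k * star (C i k)) * ((hA.eigenvalues k : ℝ) : ℂ) := by
      simp only [Function.comp_apply]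
      norm_num [RCLike.ofReal_alg]
      ring
    rw [h2, Complex.star_def, Complex.mul_conj, ← Complex.sq_norm]
    push_cast
    ring
  simp_rw [heach]
  push_cast
  rfl



variable {n : Type*} [Fintype n] [DecidableEq n]

open Matrix

lemma abs_entry_eq (C : Matrix n n ℂ) (i k : n) :
    C i k * (star C) k i = ((‖(C i k)‖ ^ 2 : ℝ) : ℂ) := by
  rw [Matrix.star_apply, Complex.star_def, Complex.mul_conj, ← Complex.sq_norm]

lemma row_sum (C : Matrix n n ℂ) (hC : C ∈ Matrix.unitaryGroup n ℂ) (i : n) :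
    ∑ k, ‖(C i k)‖ ^ 2 = 1 := by
  have h : (C * star C) i i = 1 := by
    rw [(Matrix.mem_unitaryGroup_iff).mp hC]
    simp [Matrix.one_apply]
  rw [Matrix.mul_apply] at h
  simp_rw [abs_entry_eq] at h
  rw [← Complex.ofReal_sum] at h
  exact_mod_cast h

lemma col_sum (C : Matrix n n ℂ) (hC : C ∈ Matrix.unitaryGroup n ℂ) (k : n) :
    ∑ i, ‖(C i k)‖ ^ 2 = 1 := by
  have h : (star C * C) k k = 1 := by
    rw [(Matrix.mem_unitaryGroup_iff').mp hC]
    simp [Matrix.one_apply]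
  rw [Matrix.mul_apply] at h
  have : ∀ i, (star C) k i * C i k = ((‖(C i k)‖ ^ 2 : ℝ) : ℂ) := by
    intro i; rw [mul_comm]; exact abs_entry_eq C i k
  simp_rw [this] at h
  rw [← Complex.ofReal_sum] at h
  exact_mod_cast h

lemma trace_eq_sum_eigen {A : Matrix n n ℂ} (hA : A.IsHermitian) :
    A.trace = ((∑ i, hA.eigenvalues i : ℝ) : ℂ) := by
  conv_lhs => rw [hA.spectral_theorem, Unitary.conjStarAlgAut_apply]
  rw [Matrix.trace_mul_cycle]
  rw [(Matrix.mem_unitaryGroup_iff').mp (hA.eigenvectorUnitary).2, Matrix.one_mul,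
    Matrix.trace_diagonal]
  push_cast
  rfl

lemma mul_self_spectral {A : Matrix n n ℂ} (hA : A.IsHermitian) :
    A * A = (hA.eigenvectorUnitary : Matrix n n ℂ)
      * Matrix.diagonal (fun i => ((hA.eigenvalues i ^ 2 : ℝ) : ℂ))
      * (star (hA.eigenvectorUnitary : Matrix n n ℂ)) := by
  set U : Matrix n n ℂ := (hA.eigenvectorUnitary : Matrix n n ℂ)
  set D : Matrix n n ℂ := Matrix.diagonal (RCLike.ofReal ∘ hA.eigenvalues) with hD
  have h1 : star U * U = 1 := (Matrix.mem_unitaryGroup_iff').mp (hA.eigenvectorUnitary).2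
  have h2 : D * D = Matrix.diagonal (fun i => ((hA.eigenvalues i ^ 2 : ℝ) : ℂ)) := by
    rw [hD, Matrix.diagonal_mul_diagonal]
    congr 1
    funext i
    simp [pow_two]
  conv_lhs => rw [hA.spectral_theorem, Unitary.conjStarAlgAut_apply]
  simp only [Matrix.mul_assoc]
  rw [← Matrix.mul_assoc (star U) U, h1, Matrix.one_mul, ← Matrix.mul_assoc D D, h2]

lemma trace_sq {A : Matrix n n ℂ} (hA : A.IsHermitian) :
    (A * A).trace = ((∑ i, hA.eigenvalues i ^ 2 : ℝ) : ℂ) := by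
  rw [mul_self_spectral hA, Matrix.trace_mul_cycle,
    (Matrix.mem_unitaryGroup_iff').mp (hA.eigenvectorUnitary).2, Matrix.one_mul,
    Matrix.trace_diagonal]
  push_cast
  rfl

lemma trace_pair {A B : Matrix n n ℂ} (hA : A.IsHermitian) (hB : B.IsHermitian) :
    (A * B).trace = ((∑ i, ∑ k,
      ‖((star (hB.eigenvectorUnitary : Matrix n n ℂ)
          * (hA.eigenvectorUnitary : Matrix n n ℂ)) i k)‖ ^ 2
        * (hB.eigenvalues i * hA.eigenvalues k) : ℝ) : ℂ) := by
  set U : Matrix n n ℂ := (hB.eigenvectorUnitary : Matrix n n ℂ) with hUdef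
  have hUU : U * star U = 1 := (Matrix.mem_unitaryGroup_iff).mp (hB.eigenvectorUnitary).2
  have h1 : (star U * A * U) * (star U * B * U) = star U * (A * B) * U := by
    have : (star U * A * U) * (star U * B * U) = star U * A * (U * star U) * B * U := by
      simp only [Matrix.mul_assoc]
    rw [this, hUU, Matrix.mul_one]
    simp only [Matrix.mul_assoc]
  have h2 : (star U * (A * B) * U).trace = (A * B).trace := by
    rw [Matrix.trace_mul_cycle, ← Matrix.mul_assoc, hUU, Matrix.one_mul]
  rw [← h2, ← h1]
  have h3 : star U * B * U = Matrix.diagonal (RCLike.ofReal ∘ hB.eigenvalues) :=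
    by have := hB.conjStarAlgAut_star_eigenvectorUnitary
       rwa [Unitary.conjStarAlgAut_apply, Unitary.coe_star, star_star] at this
  rw [h3]
  rw [Matrix.trace]
  have h4 : ∀ i, ((star U * A * U) * Matrix.diagonal (RCLike.ofReal ∘ hB.eigenvalues)).diag i
      = ((∑ k, ‖((star U * (hA.eigenvectorUnitary : Matrix n n ℂ)) i k)‖ ^ 2
          * (hB.eigenvalues i * hA.eigenvalues k) : ℝ) : ℂ) := by
    intro i
    rw [Matrix.diag_apply, Matrix.mul_diagonal, conj_diag hA U (hB.eigenvectorUnitary).2]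
    push_cast
    rw [Finset.sum_mul]
    apply Finset.sum_congr rfl
    intro k _
    simp only [Function.comp_apply]
    have hco : ∀ y : ℝ, (RCLike.ofReal y : ℂ) = (y : ℂ) := fun y => rfl
    rw [hco]
    push_cast
    ring
  simp_rw [h4]
  push_cast
  rfl

lemma frob_sq_eq_trace {X : Matrix n n ℂ} (hX : X.IsHermitian) :
    ((∑ s, ∑ t, ‖(X s t)‖ ^ 2 : ℝ) : ℂ) = (X * X).trace := by
  rw [Matrix.trace]
  have h : ∀ s, (X * X).diag s = ((∑ t, ‖(X s t)‖ ^ 2 : ℝ) : ℂ) := by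
    intro s
    rw [Matrix.diag_apply, Matrix.mul_apply]
    have : ∀ t, X s t * X t s = ((‖(X s t)‖ ^ 2 : ℝ) : ℂ) := by
      intro t
      have hsym : X t s = star (X s t) := by
        conv_lhs => rw [← hX.eq]
        rfl
      rw [hsym, Complex.star_def, Complex.mul_conj, ← Complex.sq_norm]
    simp_rw [this]
    push_cast
    rfl
  simp_rw [h]
  push_cast
  rfl


/-- Entropy integrand (in nats). -/
def eta (a : ℝ) : ℝ := -(a * Real.log a)

lemma eta_zero : eta 0 = 0 := by simp [eta]

lemma key_scalar' (a b : ℝ) (ha0 : 0 ≤ a) (ha1 : a ≤ 1) (hb0 : 0 < b) (hb1 : b ≤ 1) :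
    (a - b)^2/2 ≤ eta b - eta a + (a - b) * (-(Real.log b) - 1) := by
  have h : eta b - eta a + (a - b) * (-(Real.log b) - 1)
      = a * Real.log a - a * Real.log b - a + b := by
    simp only [eta]; ring
  rw [h]; exact key_scalar a b ha0 ha1 hb0 hb1

lemma sum_weighted_diff {n : Type*} [Fintype n] (W : n → n → ℝ) (hrow : ∀ i, ∑ k, W i k = 1)
    (hcol : ∀ k, ∑ i, W i k = 1) (f g : n → ℝ) :
    ∑ i, ∑ k, W i k * (f i - g k) = (∑ i, f i) - ∑ k, g k := by
  simp_rw [mul_sub, Finset.sum_sub_distrib]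
  congr 1
  · apply Finset.sum_congr rfl
    intro i _
    rw [← Finset.sum_mul, hrow i, one_mul]
  · rw [Finset.sum_comm]
    apply Finset.sum_congr rfl
    intro k _
    rw [← Finset.sum_mul, hcol k, one_mul]

lemma per_index {n : Type*} [Fintype n] (q : ℝ) (hq0 : 0 < q) (hq1 : q < 1)
    (w v r x : n → ℝ) (hw : ∀ k, 0 ≤ w k) (hv : ∀ j, 0 ≤ v j)
    (hw1 : ∑ k, w k = 1) (hv1 : ∑ j, v j = 1)
    (hr0 : ∀ k, 0 ≤ r k) (hr1 : ∀ k, r k ≤ 1) (hx0 : ∀ j, 0 ≤ x j) (hx1 : ∀ j, x j ≤ 1)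
    (b : ℝ) (hb1 : b ≤ 1)
    (hmean : (1-q) * (∑ k, w k * r k) + q * (∑ j, v j * x j) = b) :
    (1-q) * (∑ k, w k * ((r k - b)^2/2)) + q * (∑ j, v j * ((x j - b)^2/2))
      ≤ (1-q) * (∑ k, w k * (eta b - eta (r k)))
        + q * (∑ j, v j * (eta b - eta (x j))) := by
  have hq1' : (0:ℝ) < 1 - q := by linarith
  have hP0 : 0 ≤ ∑ k, w k * r k := Finset.sum_nonneg (fun k _ => mul_nonneg (hw k) (hr0 k))
  have hQ0 : 0 ≤ ∑ j, v j * x j := Finset.sum_nonneg (fun j _ => mul_nonneg (hv j) (hx0 j))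
  rcases eq_or_lt_of_le (by nlinarith : (0:ℝ) ≤ b) with hb0 | hb0
  · -- b = 0 : everything vanishes
    subst hb0
    have hP : ∑ k, w k * r k = 0 := by nlinarith
    have hQ : ∑ j, v j * x j = 0 := by nlinarith
    have hPk : ∀ k ∈ Finset.univ, w k * r k = 0 :=
      (Finset.sum_eq_zero_iff_of_nonneg (fun k _ => mul_nonneg (hw k) (hr0 k))).mp hP
    have hQj : ∀ j ∈ Finset.univ, v j * x j = 0 :=
      (Finset.sum_eq_zero_iff_of_nonneg (fun j _ => mul_nonneg (hv j) (hx0 j))).mp hQ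
    have z1 : ∑ k, w k * ((r k - 0)^2/2) = 0 := by
      apply Finset.sum_eq_zero
      intro k hk
      rcases mul_eq_zero.mp (hPk k hk) with h | h
      · rw [h, zero_mul]
      · rw [h]; simp
    have z2 : ∑ k, w k * (eta 0 - eta (r k)) = 0 := by
      apply Finset.sum_eq_zero
      intro k hk
      rcases mul_eq_zero.mp (hPk k hk) with h | h
      · rw [h, zero_mul]
      · rw [h, eta_zero]; simp
    have z3 : ∑ j, v j * ((x j - 0)^2/2) = 0 := by
      apply Finset.sum_eq_zero
      intro j hj
      rcases mul_eq_zero.mp (hQj j hj) with h | h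
      · rw [h, zero_mul]
      · rw [h]; simp
    have z4 : ∑ j, v j * (eta 0 - eta (x j)) = 0 := by
      apply Finset.sum_eq_zero
      intro j hj
      rcases mul_eq_zero.mp (hQj j hj) with h | h
      · rw [h, zero_mul]
      · rw [h, eta_zero]; simp
    rw [z1, z2, z3, z4]
  · -- b > 0 : use the strengthened Klein inequality termwise
    set c : ℝ := -(Real.log b) - 1 with hc
    have hs1 : ∑ k, w k * ((r k - b)^2/2)
        ≤ ∑ k, w k * (eta b - eta (r k) + (r k - b) * c) :=
      Finset.sum_le_sum fun k _ =>
        mul_le_mul_of_nonneg_left (key_scalar' (r k) b (hr0 k) (hr1 k) hb0 hb1) (hw k)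
    have hs2 : ∑ j, v j * ((x j - b)^2/2)
        ≤ ∑ j, v j * (eta b - eta (x j) + (x j - b) * c) :=
      Finset.sum_le_sum fun j _ =>
        mul_le_mul_of_nonneg_left (key_scalar' (x j) b (hx0 j) (hx1 j) hb0 hb1) (hv j)
    have he1 : ∑ k, w k * (eta b - eta (r k) + (r k - b) * c)
        = (∑ k, w k * (eta b - eta (r k))) + c * ((∑ k, w k * r k) - b) := by
      have hterm : ∀ k, w k * (eta b - eta (r k) + (r k - b) * c)
          = (w k * (eta b - eta (r k)) + c * (w k * r k)) - (b*c) * w k := by intro k; ring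
      simp_rw [hterm, Finset.sum_sub_distrib, Finset.sum_add_distrib,
        ← Finset.mul_sum, hw1]
      ring
    have he2 : ∑ j, v j * (eta b - eta (x j) + (x j - b) * c)
        = (∑ j, v j * (eta b - eta (x j))) + c * ((∑ j, v j * x j) - b) := by
      have hterm : ∀ j, v j * (eta b - eta (x j) + (x j - b) * c)
          = (v j * (eta b - eta (x j)) + c * (v j * x j)) - (b*c) * v j := by intro j; ring
      simp_rw [hterm, Finset.sum_sub_distrib, Finset.sum_add_distrib,
        ← Finset.mul_sum, hv1]
      ring
    have step : (1-q) * (∑ k, w k * ((r k - b)^2/2)) + q * (∑ j, v j * ((x j - b)^2/2))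
        ≤ (1-q) * ((∑ k, w k * (eta b - eta (r k))) + c * ((∑ k, w k * r k) - b))
          + q * ((∑ j, v j * (eta b - eta (x j))) + c * ((∑ j, v j * x j) - b)) := by
      rw [← he1, ← he2]
      exact add_le_add
        (mul_le_mul_of_nonneg_left hs1 (le_of_lt hq1'))
        (mul_le_mul_of_nonneg_left hs2 (le_of_lt hq0))
    have expand : (1-q) * ((∑ k, w k * (eta b - eta (r k))) + c * ((∑ k, w k * r k) - b))
          + q * ((∑ j, v j * (eta b - eta (x j))) + c * ((∑ j, v j * x j) - b))
        = (1-q) * (∑ k, w k * (eta b - eta (r k)))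
          + q * (∑ j, v j * (eta b - eta (x j)))
          + c * (((1-q) * (∑ k, w k * r k) + q * (∑ j, v j * x j)) - b) := by ring
    rw [expand, hmean] at step
    simpa using step

lemma frobSq_smul {n : Type*} [Fintype n] (c : ℝ) (X : Matrix n n ℂ) :
    ∑ s, ∑ t, ‖(((c : ℂ) • X) s t)‖ ^ 2
      = c^2 * ∑ s, ∑ t, ‖(X s t)‖ ^ 2 := by
  simp_rw [Matrix.smul_apply, smul_eq_mul, norm_mul, mul_pow, Complex.norm_real, Real.norm_eq_abs,
    sq_abs, Finset.mul_sum]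

lemma frobSq_neg {n : Type*} [Fintype n] (X Y : Matrix n n ℂ) :
    ∑ s, ∑ t, ‖((X - Y) s t)‖ ^ 2
      = ∑ s, ∑ t, ‖((Y - X) s t)‖ ^ 2 := by
  apply Finset.sum_congr rfl
  intro s _
  apply Finset.sum_congr rfl
  intro t _
  have h : (X - Y) s t = -((Y - X) s t) := by simp [Matrix.sub_apply]
  rw [h, norm_neg]

lemma frob_expand {n : Type*} [Fintype n] [DecidableEq n]
    {A B : Matrix n n ℂ} (hA : A.IsHermitian) (hB : B.IsHermitian) :
    ∑ s, ∑ t, ‖((A - B) s t)‖ ^ 2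
      = ∑ i, ∑ k, ‖((star (hB.eigenvectorUnitary : Matrix n n ℂ)
          * (hA.eigenvectorUnitary : Matrix n n ℂ)) i k)‖ ^ 2
        * (hB.eigenvalues i - hA.eigenvalues k)^2 := by
  set C : Matrix n n ℂ := star (hB.eigenvectorUnitary : Matrix n n ℂ)
      * (hA.eigenvectorUnitary : Matrix n n ℂ) with hCdef
  have hCmem : C ∈ Matrix.unitaryGroup n ℂ :=
    mul_mem (Unitary.star_mem (hB.eigenvectorUnitary).2) (hA.eigenvectorUnitary).2
  set W : n → n → ℝ := fun i k => ‖(C i k)‖ ^ 2 with hWdef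
  have hWrow : ∀ i, ∑ k, W i k = 1 := row_sum C hCmem
  have hWcol : ∀ k, ∑ i, W i k = 1 := col_sum C hCmem
  set a : n → ℝ := hA.eigenvalues with hadef
  set b : n → ℝ := hB.eigenvalues with hbdef
  have hAB : (A - B).IsHermitian := hA.sub hB
  have h1 : (((∑ s, ∑ t, ‖((A - B) s t)‖ ^ 2 : ℝ)) : ℂ)
      = ((A - B) * (A - B)).trace := frob_sq_eq_trace hAB
  have h2 : (A - B) * (A - B) = A * A - A * B - B * A + B * B := by noncomm_ring
  have h3 : ((A - B) * (A - B)).trace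
      = (A * A).trace - 2 * (A * B).trace + (B * B).trace := by
    rw [h2]
    simp only [Matrix.trace_add, Matrix.trace_sub]
    rw [Matrix.trace_mul_comm B A]
    ring
  rw [h3, trace_sq hA, trace_sq hB, trace_pair hA hB] at h1
  have h4 : ∑ s, ∑ t, ‖((A - B) s t)‖ ^ 2
      = (∑ i, a i ^ 2) - 2 * (∑ i, ∑ k, W i k * (b i * a k)) + (∑ i, b i ^ 2) := by
    have := h1
    push_cast at this
    exact_mod_cast this
  rw [h4]
  have e1 : ∑ i, ∑ k, W i k * (b i - a k)^2
      = (∑ i, ∑ k, W i k * b i ^ 2) - 2 * (∑ i, ∑ k, W i k * (b i * a k))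
        + (∑ i, ∑ k, W i k * a k ^ 2) := by
    have hterm : ∀ i k, W i k * (b i - a k)^2
        = (W i k * b i ^ 2 - 2 * (W i k * (b i * a k))) + W i k * a k ^ 2 := by
      intro i k; ring
    simp_rw [hterm, Finset.sum_add_distrib, Finset.sum_sub_distrib, ← Finset.mul_sum]
  have e2 : ∑ i, ∑ k, W i k * b i ^ 2 = ∑ i, b i ^ 2 := by
    apply Finset.sum_congr rfl
    intro i _
    rw [← Finset.sum_mul, hWrow i, one_mul]
  have e3 : ∑ i, ∑ k, W i k * a k ^ 2 = ∑ k, a k ^ 2 := by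
    rw [Finset.sum_comm]
    apply Finset.sum_congr rfl
    intro k _
    rw [← Finset.sum_mul, hWcol k, one_mul]
  rw [e1, e2, e3]
  ring

end ProofAux

/-- The Frobenius (Hilbert–Schmidt) norm of a complex matrix. -/
def frob {m n : Type*} [Fintype m] [Fintype n] (A : Matrix m n ℂ) : ℝ :=
  Real.sqrt (∑ i, ∑ j, ‖A i j‖ ^ 2)

/-- The von Neumann entropy in bits: S(ρ) = −∑ᵢ λᵢ log₂ λᵢ over the eigenvalues of ρ
(with the convention 0·log₂ 0 = 0, which holds since `Real.logb 2 0 = 0`). -/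
def vnEntropy {n : Type*} [Fintype n] [DecidableEq n] (ρ : Matrix n n ℂ) : ℝ :=
  if h : ρ.IsHermitian then ∑ i, -(h.eigenvalues i * Real.logb 2 (h.eigenvalues i)) else 0

lemma vnEntropy_eq {n : Type*} [Fintype n] [DecidableEq n] {ρ : Matrix n n ℂ}
    (h : ρ.IsHermitian) :
    vnEntropy ρ = (∑ i, ProofAux.eta (h.eigenvalues i)) / Real.log 2 := by
  rw [vnEntropy, dif_pos h, Finset.sum_div]
  apply Finset.sum_congr rfl
  intro i _
  rw [Real.logb, ProofAux.eta]
  ring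

theorem strengthened_entropy_concavity {d : ℕ} (ρ ξ : Matrix (Fin d) (Fin d) ℂ)
    (hρ : ρ.PosSemidef) (hρt : ρ.trace = 1)
    (hξ : ξ.PosSemidef) (hξt : ξ.trace = 1)
    (p : ℝ) (hp : p ∈ Set.Icc (0 : ℝ) 1) :
    vnEntropy (((1 - p : ℝ) : ℂ) • ρ + ((p : ℝ) : ℂ) • ξ) -
        ((1 - p) * vnEntropy ρ + p * vnEntropy ξ)
      ≥ (p * (1 - p) / (2 * Real.log 2)) * frob (ρ - ξ) ^ 2 := by
  obtain ⟨hp0, hp1⟩ := hp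
  rcases eq_or_lt_of_le hp0 with hp0' | hp0'
  · -- p = 0
    rw [← hp0']
    norm_num
  rcases eq_or_lt_of_le hp1 with hp1' | hp1'
  · -- p = 1
    rw [hp1']
    norm_num
  -- main case : 0 < p < 1
  set M : Matrix (Fin d) (Fin d) ℂ := ((1 - p : ℝ) : ℂ) • ρ + ((p : ℝ) : ℂ) • ξ with hMdef
  have hMh : M.IsHermitian := by
    show M.conjTranspose = M
    rw [hMdef, Matrix.conjTranspose_add, Matrix.conjTranspose_smul,
      Matrix.conjTranspose_smul, hρ.1.eq, hξ.1.eq]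
    congr 1 <;> congr 1 <;> simp [Complex.star_def, Complex.conj_ofReal]
  set UM : Matrix (Fin d) (Fin d) ℂ := (hMh.eigenvectorUnitary : Matrix (Fin d) (Fin d) ℂ)
    with hUM
  set r : Fin d → ℝ := hρ.1.eigenvalues with hrdef
  set x : Fin d → ℝ := hξ.1.eigenvalues with hxdef
  set m : Fin d → ℝ := hMh.eigenvalues with hmdef
  set C : Matrix (Fin d) (Fin d) ℂ :=
    star UM * (hρ.1.eigenvectorUnitary : Matrix (Fin d) (Fin d) ℂ) with hCdef
  set E : Matrix (Fin d) (Fin d) ℂ :=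
    star UM * (hξ.1.eigenvectorUnitary : Matrix (Fin d) (Fin d) ℂ) with hEdef
  have hCmem : C ∈ Matrix.unitaryGroup (Fin d) ℂ :=
    mul_mem (Unitary.star_mem (hMh.eigenvectorUnitary).2) (hρ.1.eigenvectorUnitary).2
  have hEmem : E ∈ Matrix.unitaryGroup (Fin d) ℂ :=
    mul_mem (Unitary.star_mem (hMh.eigenvectorUnitary).2) (hξ.1.eigenvectorUnitary).2
  set W : Fin d → Fin d → ℝ := fun i k => ‖(C i k)‖ ^ 2 with hWdef
  set V : Fin d → Fin d → ℝ := fun i j => ‖(E i j)‖ ^ 2 with hVdef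
  have hWrow : ∀ i, ∑ k, W i k = 1 := ProofAux.row_sum C hCmem
  have hWcol : ∀ k, ∑ i, W i k = 1 := ProofAux.col_sum C hCmem
  have hVrow : ∀ i, ∑ j, V i j = 1 := ProofAux.row_sum E hEmem
  have hVcol : ∀ j, ∑ i, V i j = 1 := ProofAux.col_sum E hEmem
  have hW0 : ∀ i k, 0 ≤ W i k := fun i k => by positivity
  have hV0 : ∀ i j, 0 ≤ V i j := fun i j => by positivity
  -- eigenvalue facts
  have hr0 : ∀ k, 0 ≤ r k := fun k => hρ.eigenvalues_nonneg k
  have hx0 : ∀ j, 0 ≤ x j := fun j => hξ.eigenvalues_nonneg j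
  have hr_sum : ∑ k, r k = 1 := by
    have h := ProofAux.trace_eq_sum_eigen hρ.1
    rw [hρt] at h
    exact_mod_cast h.symm
  have hx_sum : ∑ j, x j = 1 := by
    have h := ProofAux.trace_eq_sum_eigen hξ.1
    rw [hξt] at h
    exact_mod_cast h.symm
  have hr1 : ∀ k, r k ≤ 1 := by
    intro k
    rw [← hr_sum]
    exact Finset.single_le_sum (fun i _ => hr0 i) (Finset.mem_univ k)
  have hx1 : ∀ j, x j ≤ 1 := by
    intro j
    rw [← hx_sum]
    exact Finset.single_le_sum (fun i _ => hx0 i) (Finset.mem_univ j)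
  -- diagonal identity (mixture of diagonal weights)
  have hbeq : ∀ i, (1-p) * (∑ k, W i k * r k) + p * (∑ j, V i j * x j) = m i := by
    intro i
    have e2 : (star UM * M * UM) i i = ((m i : ℝ) : ℂ) := by
      rw [hUM, (by have := hMh.conjStarAlgAut_star_eigenvectorUnitary
                   rwa [Unitary.conjStarAlgAut_apply, Unitary.coe_star, star_star] at this :
        star (hMh.eigenvectorUnitary : Matrix (Fin d) (Fin d) ℂ) * M
          * (hMh.eigenvectorUnitary : Matrix (Fin d) (Fin d) ℂ)
          = Matrix.diagonal (RCLike.ofReal ∘ hMh.eigenvalues))]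
      simp [Matrix.diagonal_apply_eq, hmdef]
    have e1 : (star UM * M * UM) i i
        = ((1 - p : ℝ) : ℂ) * ((star UM * ρ * UM) i i)
          + ((p : ℝ) : ℂ) * ((star UM * ξ * UM) i i) := by
      rw [hMdef]
      simp only [Matrix.mul_add, Matrix.add_mul, Matrix.mul_smul, Matrix.smul_mul,
        Matrix.add_apply, Matrix.smul_apply, smul_eq_mul]
    rw [ProofAux.conj_diag hρ.1 UM (hMh.eigenvectorUnitary).2 i,
      ProofAux.conj_diag hξ.1 UM (hMh.eigenvectorUnitary).2 i, e2] at e1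
    show (1-p) * (∑ k, ‖((star UM
          * (hρ.1.eigenvectorUnitary : Matrix (Fin d) (Fin d) ℂ)) i k)‖ ^ 2
            * hρ.1.eigenvalues k)
        + p * (∑ j, ‖((star UM
          * (hξ.1.eigenvectorUnitary : Matrix (Fin d) (Fin d) ℂ)) i j)‖ ^ 2
            * hξ.1.eigenvalues j) = m i
    exact_mod_cast e1.symm
  have hm1 : ∀ i, m i ≤ 1 := by
    intro i
    rw [← hbeq i]
    have b1 : ∑ k, W i k * r k ≤ 1 := by
      calc ∑ k, W i k * r k ≤ ∑ k, W i k * 1 :=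
            Finset.sum_le_sum fun k _ => mul_le_mul_of_nonneg_left (hr1 k) (hW0 i k)
        _ = 1 := by simp [hWrow i]
    have b2 : ∑ j, V i j * x j ≤ 1 := by
      calc ∑ j, V i j * x j ≤ ∑ j, V i j * 1 :=
            Finset.sum_le_sum fun j _ => mul_le_mul_of_nonneg_left (hx1 j) (hV0 i j)
        _ = 1 := by simp [hVrow i]
    nlinarith
  -- Frobenius norm identities
  set S : ℝ := ∑ s, ∑ t, ‖((ρ - ξ) s t)‖ ^ 2 with hSdef
  have hd1 : ρ - M = ((p : ℝ) : ℂ) • (ρ - ξ) := by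
    rw [hMdef]
    ext i j
    simp only [Matrix.sub_apply, Matrix.add_apply, Matrix.smul_apply, smul_eq_mul]
    push_cast
    ring
  have hd2 : ξ - M = ((1 - p : ℝ) : ℂ) • (ξ - ρ) := by
    rw [hMdef]
    ext i j
    simp only [Matrix.sub_apply, Matrix.add_apply, Matrix.smul_apply, smul_eq_mul]
    push_cast
    ring
  have hA1 : ∑ i, ∑ k, W i k * (m i - r k)^2 = p^2 * S := by
    have h := ProofAux.frob_expand hρ.1 hMh
    rw [hd1, ProofAux.frobSq_smul] at h
    rw [← h, hSdef]
  have hA2 : ∑ i, ∑ j, V i j * (m i - x j)^2 = (1-p)^2 * S := by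
    have h := ProofAux.frob_expand hξ.1 hMh
    rw [hd2, ProofAux.frobSq_smul, ProofAux.frobSq_neg ξ ρ] at h
    rw [← h, hSdef]
  -- the core inequality in nats
  have idt : (∑ i, ProofAux.eta (m i))
        - ((1-p) * (∑ k, ProofAux.eta (r k)) + p * (∑ j, ProofAux.eta (x j)))
      = ∑ i, ((1-p) * (∑ k, W i k * (ProofAux.eta (m i) - ProofAux.eta (r k)))
          + p * (∑ j, V i j * (ProofAux.eta (m i) - ProofAux.eta (x j)))) := by
    rw [Finset.sum_add_distrib, ← Finset.mul_sum, ← Finset.mul_sum,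
      ProofAux.sum_weighted_diff W hWrow hWcol (fun i => ProofAux.eta (m i))
        (fun k => ProofAux.eta (r k)),
      ProofAux.sum_weighted_diff V hVrow hVcol (fun i => ProofAux.eta (m i))
        (fun j => ProofAux.eta (x j))]
    ring
  have hper : ∀ i ∈ Finset.univ,
      (1-p) * (∑ k, W i k * ((r k - m i)^2/2)) + p * (∑ j, V i j * ((x j - m i)^2/2))
        ≤ (1-p) * (∑ k, W i k * (ProofAux.eta (m i) - ProofAux.eta (r k)))
          + p * (∑ j, V i j * (ProofAux.eta (m i) - ProofAux.eta (x j))) := by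
    intro i _
    exact ProofAux.per_index p hp0' hp1' (W i) (V i) r x (hW0 i) (hV0 i)
      (hWrow i) (hVrow i) hr0 hr1 hx0 hx1 (m i) (hm1 i) (hbeq i)
  have hsum2 : ∑ i, ((1-p) * (∑ k, W i k * ((r k - m i)^2/2))
        + p * (∑ j, V i j * ((x j - m i)^2/2)))
      = p * (1-p) / 2 * S := by
    rw [Finset.sum_add_distrib, ← Finset.mul_sum, ← Finset.mul_sum]
    have c1 : ∑ i, ∑ k, W i k * ((r k - m i)^2/2)
        = (∑ i, ∑ k, W i k * (m i - r k)^2) / 2 := by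
      rw [Finset.sum_div]
      apply Finset.sum_congr rfl
      intro i _
      rw [Finset.sum_div]
      apply Finset.sum_congr rfl
      intro k _
      ring
    have c2 : ∑ i, ∑ j, V i j * ((x j - m i)^2/2)
        = (∑ i, ∑ j, V i j * (m i - x j)^2) / 2 := by
      rw [Finset.sum_div]
      apply Finset.sum_congr rfl
      intro i _
      rw [Finset.sum_div]
      apply Finset.sum_congr rfl
      intro j _
      ring
    rw [c1, c2, hA1, hA2]
    ring
  have core : (∑ i, ProofAux.eta (m i))
        - ((1-p) * (∑ k, ProofAux.eta (r k)) + p * (∑ j, ProofAux.eta (x j)))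
      ≥ p * (1-p) / 2 * S := by
    rw [idt, ← hsum2]
    exact Finset.sum_le_sum hper
  -- convert to bits
  have hlog : (0:ℝ) < Real.log 2 := Real.log_pos (by norm_num)
  have hfrob : frob (ρ - ξ) ^ 2 = S := by
    rw [frob, hSdef]
    apply Real.sq_sqrt
    positivity
  rw [vnEntropy_eq hMh, vnEntropy_eq hρ.1, vnEntropy_eq hξ.1, hfrob]
  rw [ge_iff_le]
  have lhs_eq : (∑ i, ProofAux.eta (hMh.eigenvalues i)) / Real.log 2
        - ((1 - p) * ((∑ i, ProofAux.eta (hρ.1.eigenvalues i)) / Real.log 2)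
          + p * ((∑ i, ProofAux.eta (hξ.1.eigenvalues i)) / Real.log 2))
      = ((∑ i, ProofAux.eta (m i))
        - ((1-p) * (∑ k, ProofAux.eta (r k)) + p * (∑ j, ProofAux.eta (x j)))) / Real.log 2 := by
    rw [hmdef, hrdef, hxdef]
    ring
  have rhs_eq : p * (1 - p) / (2 * Real.log 2) * S = (p * (1-p) / 2 * S) / Real.log 2 := by
    ring
  rw [lhs_eq, rhs_eq]
  exact (div_le_div_iff_of_pos_right hlog).mpr core
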